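/- Let r ≥ 3 be an integer and ρ a real number with ρ > 1/4, and let M be the r×r real symmetric matrix with entries M_{st} = −1/(k + k²) where k = max(s,t), for s ≠ t, and M_{ss} = (s − 1 − s²)/(s + s²) + 3/2 − 2ρ. Then the smallest eigenvalue λ of M satisfies λ ≤ 1 − 2ρ < 2ρ. -/

import Mathlib

/-- The `r × r` matrix with off-diagonal entries `M_{st} = -1/(k+k²)`, `k = max(s,t)`, and
diagonal entries `M_{ss} = (s-1-s²)/(s+s²) + C` (a Lean index `s : Fin r` corresponds to the
paper index `s + 1`). -/
noncomputable def Mmat (r : ℕ) (C : ℝ) : Matrix (Fin r) (Fin r) ℝ :=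
  fun s t =>
    if s = t then
      (((s : ℕ) : ℝ) + 1 - 1 - (((s : ℕ) : ℝ) + 1) ^ 2) /
          ((((s : ℕ) : ℝ) + 1) + (((s : ℕ) : ℝ) + 1) ^ 2) + C
    else
      -1 / (((max (s : ℕ) (t : ℕ) : ℕ) : ℝ) + 1 + (((max (s : ℕ) (t : ℕ) : ℕ) : ℝ) + 1) ^ 2)

lemma Mmat_isHermitian (r : ℕ) (C : ℝ) : (Mmat r C).IsHermitian := by
  ext i j
  simp only [Matrix.conjTranspose_apply, Mmat, star_trivial]
  rcases eq_or_ne i j with h | h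
  · simp [h]
  · rw [if_neg (Ne.symm h), if_neg h, max_comm]

/-- For `r ≥ 3` and `ρ > 1/4`, with `C = 3/2 - 2ρ`, the smallest eigenvalue `λ` of `M`
satisfies `λ ≤ 1 - 2ρ < 2ρ`. -/
theorem smallest_eigenvalue_bound (r : ℕ) (hr : 3 ≤ r) (ρ : ℝ) (hρ : 1 / 4 < ρ) :
    ∃ lam : ℝ,
      (∃ v : Fin r → ℝ, v ≠ 0 ∧ (Mmat r (3 / 2 - 2 * ρ)).mulVec v = lam • v) ∧
      (∀ μ : ℝ, (∃ v : Fin r → ℝ, v ≠ 0 ∧ (Mmat r (3 / 2 - 2 * ρ)).mulVec v = μ • v) →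
        lam ≤ μ) ∧
      lam ≤ 1 - 2 * ρ ∧ 1 - 2 * ρ < 2 * ρ := by
  set C : ℝ := 3 / 2 - 2 * ρ with hC
  set A : Matrix (Fin r) (Fin r) ℝ := Mmat r C with hA_def
  have hA : A.IsHermitian := Mmat_isHermitian r C
  obtain ⟨i0, -, hmin⟩ := Finset.exists_min_image Finset.univ hA.eigenvalues
    ⟨⟨0, by omega⟩, Finset.mem_univ _⟩
  set lam := hA.eigenvalues i0 with hlam
  -- positive semidefiniteness of A - lam • 1
  have hU : (hA.eigenvectorUnitary : Matrix (Fin r) (Fin r) ℝ) *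
      star (hA.eigenvectorUnitary : Matrix (Fin r) (Fin r) ℝ) = 1 :=
    Matrix.mem_unitaryGroup_iff.mp hA.eigenvectorUnitary.2
  have hN : A - lam • 1 =
      (hA.eigenvectorUnitary : Matrix (Fin r) (Fin r) ℝ) *
        Matrix.diagonal (fun i => hA.eigenvalues i - lam) *
        star (hA.eigenvectorUnitary : Matrix (Fin r) (Fin r) ℝ) := by
    conv_lhs => rw [hA.spectral_theorem, Unitary.conjStarAlgAut_apply, ← hU]
    have : (lam • ((hA.eigenvectorUnitary : Matrix (Fin r) (Fin r) ℝ) *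
        star (hA.eigenvectorUnitary : Matrix (Fin r) (Fin r) ℝ))) =
        (hA.eigenvectorUnitary : Matrix (Fin r) (Fin r) ℝ) * (lam • 1) *
        star (hA.eigenvectorUnitary : Matrix (Fin r) (Fin r) ℝ) := by
      rw [Matrix.mul_smul, Matrix.smul_mul, mul_one]
    rw [this, ← Matrix.sub_mul, ← Matrix.mul_sub]
    congr 1
    rw [Matrix.smul_one_eq_diagonal, ← Matrix.diagonal_sub]
    congr 1
  have hPSD : (A - lam • 1).PosSemidef := by
    rw [hN, Matrix.star_eq_conjTranspose]
    exact (Matrix.posSemidef_diagonal_iff.mpr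
      (fun i => sub_nonneg.mpr (hmin i (Finset.mem_univ i)))).mul_mul_conjTranspose_same _
  have quad : ∀ x : Fin r → ℝ, lam * dotProduct x x ≤ dotProduct x (A.mulVec x) := by
    intro x
    have h := hPSD.dotProduct_mulVec_nonneg x
    simp only [Matrix.sub_mulVec, Matrix.smul_mulVec, Matrix.one_mulVec,
      dotProduct_sub, dotProduct_smul, smul_eq_mul, star_trivial] at h
    linarith
  refine ⟨lam, ⟨⇑(hA.eigenvectorBasis i0), ?_, hA.mulVec_eigenvectorBasis i0⟩, ?_, ?_, by linarith⟩
  · intro h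
    exact hA.eigenvectorBasis.orthonormal.ne_zero i0 (by ext j; exact congrFun h j)
  · rintro μ ⟨v, hv0, hv⟩
    have hvv : 0 < dotProduct v v := by
      have h1 : dotProduct v v ≠ 0 := fun h => hv0 (dotProduct_self_eq_zero.mp h)
      have h2 : 0 ≤ dotProduct v v :=
        Finset.sum_nonneg fun i _ => mul_self_nonneg _
      exact lt_of_le_of_ne h2 (Ne.symm h1)
    have h := quad v
    rw [hv, dotProduct_smul, smul_eq_mul] at h
    exact le_of_mul_le_mul_right h hvv
  · -- Rayleigh quotient at w = e₀ + e₁ - 2e₂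
    have h0 : (0 : ℕ) < r := by omega
    have h1 : (1 : ℕ) < r := by omega
    have h2 : (2 : ℕ) < r := by omega
    set a : Fin r := ⟨0, h0⟩
    set b : Fin r := ⟨1, h1⟩
    set c : Fin r := ⟨2, h2⟩
    set w : Fin r → ℝ := Pi.single a 1 + Pi.single b 1 + Pi.single c (-2) with hw
    have hab : a ≠ b := by simp [a, b, Fin.ext_iff]
    have hac : a ≠ c := by simp [a, c, Fin.ext_iff]
    have hbc : b ≠ c := by simp [b, c, Fin.ext_iff]
    have hww : dotProduct w w = 6 := by
      simp [hw, dotProduct_add, add_dotProduct, single_dotProduct,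
        Pi.single_apply, hab, hac, hbc, hab.symm, hac.symm, hbc.symm]
      norm_num
    have hAw : dotProduct w (A.mulVec w) = 6 * C - 3 := by
      have ea : ((a : ℕ) : ℝ) = 0 := by simp [a]
      have eb : ((b : ℕ) : ℝ) = 1 := by simp [b]
      have ec : ((c : ℕ) : ℝ) = 2 := by simp [c]
      have Aaa : A a a = -1/2 + C := by
        simp only [hA_def, Mmat, if_pos rfl, ea]; norm_num
      have Abb : A b b = -1/2 + C := by
        simp only [hA_def, Mmat, if_pos rfl, eb]; norm_num
      have Acc : A c c = -7/12 + C := by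
        simp only [hA_def, Mmat, if_pos rfl, ec]; norm_num
      have Aab : A a b = -1/6 := by
        simp only [hA_def, Mmat, if_neg hab]
        norm_num [a, b]
      have Aba : A b a = -1/6 := by
        simp only [hA_def, Mmat, if_neg hab.symm]
        norm_num [a, b]
      have Aac : A a c = -1/12 := by
        simp only [hA_def, Mmat, if_neg hac]
        norm_num [a, c]
      have Aca : A c a = -1/12 := by
        simp only [hA_def, Mmat, if_neg hac.symm]
        norm_num [a, c]
      have Abc : A b c = -1/12 := by
        simp only [hA_def, Mmat, if_neg hbc]
        norm_num [b, c]
      have Acb : A c b = -1/12 := by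
        simp only [hA_def, Mmat, if_neg hbc.symm]
        norm_num [b, c]
      rw [hw]
      simp only [Matrix.mulVec_add, Matrix.mulVec_single, dotProduct_add,
        add_dotProduct, single_dotProduct, Pi.add_apply, Pi.smul_apply, op_smul_eq_mul, Matrix.col_apply]
      rw [Aaa, Abb, Acc, Aab, Aba, Aac, Aca, Abc, Acb]
      ring
    have h := quad w
    rw [hww, hAw, hC] at h
    clear_value lam
    linarith
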